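/- arXiv:2205.14097 — 2 statements merged into one kernel-verified Lean document; each statement's English description precedes it below -/
import Mathlib

section
/- Let G = (V,E) be a finite simple graph such that both G and its graph complement Gᶜ = (V,Eᶜ) are connected, and equip each with its geodesic metric. If (V, d_G) is a natural metric space, then (V, d_{Gᶜ}) is a natural metric space. -/
/-- A group structure `s` on `X` is compatible with a (ℕ-valued) distance `d`: all left
translations, right translations, and the inversion preserve `d`. -/
def CompatibleN {X : Type*} (d : X → X → ℕ) (s : Group X) : Prop :=
  (∀ g x y : X, d (s.mul g x) (s.mul g y) = d x y) ∧
  (∀ g x y : X, d (s.mul x g) (s.mul y g) = d x y) ∧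
  (∀ x y : X, d (s.inv x) (s.inv y) = d x y)

/-- Two group structures are isomorphic as groups. -/
def GroupStructIso {X Y : Type*} (s : Group X) (t : Group Y) : Prop :=
  ∃ f : X ≃ Y, ∀ a b : X, f (s.mul a b) = t.mul (f a) (f b)

/-- A (ℕ-valued) distance `d` on `X` is natural: there is a compatible group structure and
any two compatible group structures are isomorphic. -/
def NaturalN {X : Type*} (d : X → X → ℕ) : Prop :=
  (∃ s : Group X, CompatibleN d s) ∧
  ∀ s t : Group X, CompatibleN d s → CompatibleN d t → GroupStructIso s t

open SimpleGraph

lemma dist_le_iso {V : Type*} {G G' : SimpleGraph V} (e : G ≃g G') (u v : V) :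
    G'.dist (e u) (e v) ≤ G.dist u v := by
  by_cases hr : G.Reachable u v
  · obtain ⟨p, hp⟩ := hr.exists_walk_length_eq_dist
    calc G'.dist (e u) (e v) ≤ (p.map e.toHom).length := SimpleGraph.dist_le _
      _ = p.length := SimpleGraph.Walk.length_map _ _
      _ = G.dist u v := hp
  · have hr' : ¬ G'.Reachable (e u) (e v) := fun hh => hr (by
      have := hh.map e.symm.toHom
      simpa using this)
    simp [SimpleGraph.dist_eq_zero_of_not_reachable hr']

lemma dist_iso {V : Type*} {G G' : SimpleGraph V} (e : G ≃g G') (u v : V) :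
    G'.dist (e u) (e v) = G.dist u v := by
  refine le_antisymm (dist_le_iso e u v) ?_
  have := dist_le_iso e.symm (e u) (e v)
  simpa using this

/-- A bijection preserving graph distance preserves complement distance. -/
lemma dist_compl_pres {V : Type*} {G : SimpleGraph V} (f : V ≃ V)
    (hf : ∀ x y, G.dist (f x) (f y) = G.dist x y) (u v : V) :
    Gᶜ.dist (f u) (f v) = Gᶜ.dist u v := by
  have hadj : ∀ x y, G.Adj (f x) (f y) ↔ G.Adj x y := by
    intro x y
    rw [← SimpleGraph.dist_eq_one_iff_adj, ← SimpleGraph.dist_eq_one_iff_adj, hf]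
  exact dist_iso (G := Gᶜ) (G' := Gᶜ)
    ⟨f, by
      intro x y
      simp only [SimpleGraph.compl_adj, hadj]
      constructor
      · rintro ⟨h1, h2⟩; exact ⟨fun h => h1 (by rw [h]), h2⟩
      · rintro ⟨h1, h2⟩; exact ⟨f.injective.ne h1, h2⟩⟩ u v


lemma compat_compl {V : Type*} {G : SimpleGraph V} {s : Group V}
    (hs : CompatibleN G.dist s) : CompatibleN Gᶜ.dist s := by
  letI := s
  obtain ⟨hl, hr, hi⟩ := hs
  exact ⟨fun g x y => dist_compl_pres (Equiv.mulLeft g) (hl g) x y,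
    fun g x y => dist_compl_pres (Equiv.mulRight g) (hr g) x y,
    fun x y => dist_compl_pres (Equiv.inv V) hi x y⟩


/-- If a finite simple graph and its complement are both connected and the graph with its
geodesic metric is a natural metric space, then so is its complement with its geodesic
metric. -/
theorem natural_graph_complement
    {V : Type*} [Fintype V] (G : SimpleGraph V)
    (hG : G.Connected) (hGc : Gᶜ.Connected)
    (h : NaturalN G.dist) : NaturalN Gᶜ.dist := by
  constructor
  · obtain ⟨s, hs⟩ := h.1
    exact ⟨s, compat_compl hs⟩
  · intro s t hsc htc
    have hs' := compat_compl (G := Gᶜ) hsc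
    have ht' := compat_compl (G := Gᶜ) htc
    rw [compl_compl] at hs' ht'
    exact h.2 s t hs' ht'
end

section
/- If G and H are finite natural groups, then the direct product G × H is a natural group. -/
/-- A group structure `s` on `X` is compatible with the metric `m`: all left translations,
right translations, and the inversion are isometries. -/
def Compatible {X : Type*} (m : MetricSpace X) (s : Group X) : Prop :=
  (∀ g x y : X, m.dist (s.mul g x) (s.mul g y) = m.dist x y) ∧
  (∀ g x y : X, m.dist (s.mul x g) (s.mul y g) = m.dist x y) ∧
  (∀ x y : X, m.dist (s.inv x) (s.inv y) = m.dist x y)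

/-- A group `G` is natural if there is a metric on its underlying set with which its group
structure is compatible such that every group structure compatible with this metric is
isomorphic to `G`. -/
def NaturalGroup (G : Type*) [grp : Group G] : Prop :=
  ∃ m : MetricSpace G,
    Compatible m grp ∧ ∀ s : Group G, Compatible m s → GroupStructIso s grp

noncomputable section NaturalGroupAux

namespace NaturalGroupAux

attribute [local instance] Classical.propDecidable

/-! ### Generic helpers for explicit metric space structures -/

lemma mdist_nonneg {X : Type*} (m : MetricSpace X) (x y : X) : 0 ≤ m.dist x y := by
  letI := m; exact dist_nonneg

lemma mdist_pos {X : Type*} (m : MetricSpace X) {x y : X} (h : x ≠ y) : 0 < m.dist x y := by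
  letI := m; exact dist_pos.2 h

lemma mdist_self {X : Type*} (m : MetricSpace X) (x : X) : m.dist x x = 0 := m.dist_self x

/-- Build a metric space from a distance function. -/
def mkMetric {X : Type*} (d : X → X → ℝ)
    (h0 : ∀ x, d x x = 0) (hc : ∀ x y, d x y = d y x)
    (ht : ∀ x y z, d x z ≤ d x y + d y z)
    (he : ∀ x y, d x y = 0 → x = y) : MetricSpace X :=
  { dist := d, dist_self := h0, dist_comm := hc, dist_triangle := ht,
    eq_of_dist_eq_zero := fun {x y} h => he x y h }

@[simp] lemma mkMetric_dist {X : Type*} (d : X → X → ℝ) (h0 hc ht he) (x y : X) :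
    (mkMetric d h0 hc ht he).dist x y = d x y := rfl

/-! ### The squashing function -/

def f0 (t : ℝ) : ℝ := t / (1 + t)

lemma f0_nonneg {t : ℝ} (h : 0 ≤ t) : 0 ≤ f0 t := div_nonneg h (by linarith)

lemma f0_lt_one {t : ℝ} (h : 0 ≤ t) : f0 t < 1 := by
  rw [f0, div_lt_one (by linarith)]; linarith

lemma f0_pos {t : ℝ} (h : 0 < t) : 0 < f0 t := div_pos h (by linarith)

lemma f0_inj {t u : ℝ} (ht : 0 ≤ t) (hu : 0 ≤ u) (h : f0 t = f0 u) : t = u := by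
  rw [f0, f0, div_eq_div_iff (by linarith) (by linarith)] at h
  nlinarith

/-! ### Squashing a metric so its nonzero values lie in `(c, c+1)` -/

def squash {X : Type*} (c : ℝ) (hc : 1 ≤ c) (m : MetricSpace X) : MetricSpace X :=
  mkMetric (fun x y => if x = y then 0 else c + f0 (m.dist x y))
    (fun x => if_pos rfl)
    (by
      intro x y
      rcases eq_or_ne x y with rfl | h
      · rfl
      · rw [if_neg h, if_neg (Ne.symm h), m.dist_comm])
    (by
      intro x y z
      have hnn : ∀ a b : X, 0 ≤ if a = b then (0:ℝ) else c + f0 (m.dist a b) := by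
        intro a b
        rcases eq_or_ne a b with rfl | h
        · simp
        · rw [if_neg h]
          have := f0_nonneg (mdist_nonneg m a b)
          linarith
      rcases eq_or_ne x z with rfl | hxz
      · rw [if_pos rfl]
        exact add_nonneg (hnn x y) (hnn y x)
      rcases eq_or_ne x y with rfl | hxy
      · rw [if_pos rfl, zero_add]
      rcases eq_or_ne y z with rfl | hyz
      · rw [if_pos rfl, add_zero]
      rw [if_neg hxz, if_neg hxy, if_neg hyz]
      have b1 := f0_lt_one (mdist_nonneg m x z)
      have b2 := f0_nonneg (mdist_nonneg m x y)
      have b3 := f0_nonneg (mdist_nonneg m y z)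
      linarith)
    (by
      intro x y h
      by_contra hne
      rw [if_neg hne] at h
      have := f0_nonneg (mdist_nonneg m x y)
      linarith)

lemma squash_dist_ne {X : Type*} (c : ℝ) (hc : 1 ≤ c) (m : MetricSpace X) {x y : X}
    (h : x ≠ y) : (squash c hc m).dist x y = c + f0 (m.dist x y) := if_neg h

lemma squash_dist_bounds {X : Type*} (c : ℝ) (hc : 1 ≤ c) (m : MetricSpace X) {x y : X}
    (h : x ≠ y) : c < (squash c hc m).dist x y ∧ (squash c hc m).dist x y < c + 1 := by
  rw [squash_dist_ne c hc m h]
  have h1 := f0_pos (mdist_pos m h)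
  have h2 := f0_lt_one (mdist_nonneg m x y)
  constructor <;> linarith

lemma squash_dist_eq_iff {X : Type*} (c : ℝ) (hc : 1 ≤ c) (m : MetricSpace X)
    (x y z w : X) :
    (squash c hc m).dist x y = (squash c hc m).dist z w ↔ m.dist x y = m.dist z w := by
  by_cases hxy : x = y <;> by_cases hzw : z = w
  · subst hxy; subst hzw
    simp [mdist_self, (squash c hc m).dist_self]
  · subst hxy
    have h1 : (squash c hc m).dist x x = 0 := (squash c hc m).dist_self x
    have h2 := squash_dist_bounds c hc m hzw
    have h3 : m.dist x x = 0 := mdist_self m x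
    have h4 := mdist_pos m hzw
    constructor <;> intro h <;> [linarith; linarith]
  · subst hzw
    have h1 : (squash c hc m).dist z z = 0 := (squash c hc m).dist_self z
    have h2 := squash_dist_bounds c hc m hxy
    have h3 : m.dist z z = 0 := mdist_self m z
    have h4 := mdist_pos m hxy
    constructor <;> intro h <;> [linarith; linarith]
  · rw [squash_dist_ne c hc m hxy, squash_dist_ne c hc m hzw]
    constructor
    · intro h
      exact f0_inj (mdist_nonneg m x y) (mdist_nonneg m z w) (by linarith)
    · intro h; rw [h]

lemma compatible_squash_iff {X : Type*} (c : ℝ) (hc : 1 ≤ c) (m : MetricSpace X)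
    (s : Group X) : Compatible (squash c hc m) s ↔ Compatible m s := by
  constructor <;> rintro ⟨h1, h2, h3⟩
  · exact ⟨fun g x y => (squash_dist_eq_iff c hc m _ _ _ _).1 (h1 g x y),
      fun g x y => (squash_dist_eq_iff c hc m _ _ _ _).1 (h2 g x y),
      fun x y => (squash_dist_eq_iff c hc m _ _ _ _).1 (h3 x y)⟩
  · exact ⟨fun g x y => (squash_dist_eq_iff c hc m _ _ _ _).2 (h1 g x y),
      fun g x y => (squash_dist_eq_iff c hc m _ _ _ _).2 (h2 g x y),
      fun x y => (squash_dist_eq_iff c hc m _ _ _ _).2 (h3 x y)⟩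

/-! ### Product metric -/

def prodMetric {G H : Type*} (mG : MetricSpace G) (mH : MetricSpace H) :
    MetricSpace (G × H) :=
  mkMetric (fun p q => mG.dist p.1 q.1 + mH.dist p.2 q.2)
    (fun p => by rw [mdist_self, mdist_self]; ring)
    (fun p q => by rw [mG.dist_comm p.1 q.1, mH.dist_comm p.2 q.2])
    (fun p q r => by
      have := mG.dist_triangle p.1 q.1 r.1
      have := mH.dist_triangle p.2 q.2 r.2
      linarith)
    (fun p q h => by
      have h1 := mdist_nonneg mG p.1 q.1
      have h2 := mdist_nonneg mH p.2 q.2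
      have e1 : mG.dist p.1 q.1 = 0 := by linarith
      have e2 : mH.dist p.2 q.2 = 0 := by linarith
      exact Prod.ext (mG.eq_of_dist_eq_zero e1) (mH.eq_of_dist_eq_zero e2))

@[simp] lemma prodMetric_dist {G H : Type*} (mG : MetricSpace G) (mH : MetricSpace H)
    (a : G) (b : H) (a' : G) (b' : H) :
    (prodMetric mG mH).dist (a, b) (a', b') = mG.dist a a' + mH.dist b b' := rfl

/-! ### Group structure projections -/

lemma grp_assoc {X : Type*} [s : Group X] (a b c : X) :
    s.mul (s.mul a b) c = s.mul a (s.mul b c) := mul_assoc a b c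

lemma grp_one_mul {X : Type*} [s : Group X] (a : X) : s.mul s.one a = a := one_mul a

lemma grp_inv_mul {X : Type*} [s : Group X] (a : X) : s.mul (s.inv a) a = s.one :=
  inv_mul_cancel a

end NaturalGroupAux


open NaturalGroupAux in
/-- The direct product of two finite natural groups is a natural group. -/
theorem naturalGroup_prod (G H : Type*) [Group G] [Group H] [Finite G] [Finite H]
    (hG : NaturalGroup G) (hH : NaturalGroup H) : NaturalGroup (G × H) := by
  rename_i iG iH _ _
  classical
  obtain ⟨mG0, hGc0, hGu0⟩ := hG
  obtain ⟨mH0, hHc0, hHu0⟩ := hH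
  let mG := squash 8 (by norm_num) mG0
  let mH := squash 1 le_rfl mH0
  let m := prodMetric mG mH
  have hGc : Compatible mG iG := (compatible_squash_iff _ _ _ _).2 hGc0
  have hHc : Compatible mH iH := (compatible_squash_iff _ _ _ _).2 hHc0
  have hGu : ∀ t : Group G, Compatible mG t → GroupStructIso t iG :=
    fun t ht => hGu0 t ((compatible_squash_iff _ _ _ _).1 ht)
  have hHu : ∀ t : Group H, Compatible mH t → GroupStructIso t iH :=
    fun t ht => hHu0 t ((compatible_squash_iff _ _ _ _).1 ht)
  have hmd' : ∀ p q : G × H, m.dist p q = mG.dist p.1 q.1 + mH.dist p.2 q.2 :=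
    fun _ _ => rfl
  have dG0 : ∀ a b : G, a = b → mG.dist a b = 0 := fun a b h => h ▸ mdist_self mG a
  have dH0 : ∀ a b : H, a = b → mH.dist a b = 0 := fun a b h => h ▸ mdist_self mH a
  have hGrange : ∀ a b : G, a ≠ b → 8 < mG.dist a b ∧ mG.dist a b < 9 := by
    intro a b h
    have h2 := squash_dist_bounds 8 (by norm_num) mG0 h
    exact ⟨h2.1, by linarith [h2.2]⟩
  have hHrange : ∀ a b : H, a ≠ b → 1 < mH.dist a b ∧ mH.dist a b < 2 := by
    intro a b h
    have h2 := squash_dist_bounds 1 le_rfl mH0 h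
    exact ⟨h2.1, by linarith [h2.2]⟩
  refine ⟨m, ⟨?_, ?_, ?_⟩, ?_⟩
  · intro g x y
    exact congrArg₂ (· + ·) (hGc.1 g.1 x.1 y.1) (hHc.1 g.2 x.2 y.2)
  · intro g x y
    exact congrArg₂ (· + ·) (hGc.2.1 g.1 x.1 y.1) (hHc.2.1 g.2 x.2 y.2)
  · intro x y
    exact congrArg₂ (· + ·) (hGc.2.2 x.1 y.1) (hHc.2.2 x.2 y.2)
  intro s hs
  obtain ⟨hsl, hsr, hsi⟩ := hs
  -- the two coordinate relations are determined by the metric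
  have hR : ∀ x y z w : G × H, m.dist x y = m.dist z w → x.1 = y.1 → z.1 = w.1 := by
    intro x y z w hd h1
    by_contra h2
    rw [hmd' x y, hmd' z w] at hd
    have e1 : mG.dist x.1 y.1 = 0 := dG0 _ _ h1
    have e2 := hGrange z.1 w.1 h2
    have e3 : mH.dist x.2 y.2 < 2 := by
      rcases eq_or_ne x.2 y.2 with h | h
      · rw [dH0 _ _ h]; norm_num
      · exact (hHrange _ _ h).2
    have e4 := mdist_nonneg mH z.2 w.2
    linarith
  have hS : ∀ x y z w : G × H, m.dist x y = m.dist z w → x.2 = y.2 → z.2 = w.2 := by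
    intro x y z w hd h1
    by_contra h2
    rw [hmd' x y, hmd' z w] at hd
    have e1 : mH.dist x.2 y.2 = 0 := dH0 _ _ h1
    have e2 := hHrange z.2 w.2 h2
    rcases eq_or_ne x.1 y.1 with h3 | h3 <;> rcases eq_or_ne z.1 w.1 with h4 | h4
    · have c1 := dG0 _ _ h3; have c2 := dG0 _ _ h4; linarith
    · have c1 := dG0 _ _ h3; have c2 := (hGrange z.1 w.1 h4).1; linarith
    · have c1 := (hGrange x.1 y.1 h3).1; have c2 := dG0 _ _ h4; linarith
    · have c1 := (hGrange x.1 y.1 h3).2; have c2 := (hGrange z.1 w.1 h4).1; linarith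
  -- congruence of coordinates of products and inverses
  have kMul1 : ∀ x y x' y' : G × H, x.1 = x'.1 → y.1 = y'.1 →
      (s.mul x y).1 = (s.mul x' y').1 := by
    intro x y x' y' h1 h2
    exact (hR y y' (s.mul x y) (s.mul x y') (hsl x y y').symm h2).trans
      (hR x x' (s.mul x y') (s.mul x' y') (hsr y' x x').symm h1)
  have kMul2 : ∀ x y x' y' : G × H, x.2 = x'.2 → y.2 = y'.2 →
      (s.mul x y).2 = (s.mul x' y').2 := by
    intro x y x' y' h1 h2
    exact (hS y y' (s.mul x y) (s.mul x y') (hsl x y y').symm h2).trans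
      (hS x x' (s.mul x y') (s.mul x' y') (hsr y' x x').symm h1)
  have kInv1 : ∀ x x' : G × H, x.1 = x'.1 → (s.inv x).1 = (s.inv x').1 :=
    fun x x' h => hR x x' _ _ (hsi x x').symm h
  have kInv2 : ∀ x x' : G × H, x.2 = x'.2 → (s.inv x).2 = (s.inv x').2 :=
    fun x x' h => hS x x' _ _ (hsi x x').symm h
  -- the induced coordinate operations
  set o1 : G := (s.one).1 with ho1
  set o2 : H := (s.one).2 with ho2
  let mulG : G → G → G := fun a b => (s.mul (a, o2) (b, o2)).1
  let mulH : H → H → H := fun a b => (s.mul (o1, a) (o1, b)).2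
  let invG : G → G := fun a => (s.inv (a, o2)).1
  let invH : H → H := fun a => (s.inv (o1, a)).2
  have star1 : ∀ x y : G × H, (s.mul x y).1 = mulG x.1 y.1 :=
    fun x y => kMul1 x y (x.1, o2) (y.1, o2) rfl rfl
  have star2 : ∀ x y : G × H, (s.mul x y).2 = mulH x.2 y.2 :=
    fun x y => kMul2 x y (o1, x.2) (o1, y.2) rfl rfl
  have star : ∀ x y : G × H, s.mul x y = (mulG x.1 y.1, mulH x.2 y.2) :=
    fun x y => Prod.ext (star1 x y) (star2 x y)
  have starInv1 : ∀ x : G × H, (s.inv x).1 = invG x.1 :=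
    fun x => kInv1 x (x.1, o2) rfl
  have starInv2 : ∀ x : G × H, (s.inv x).2 = invH x.2 :=
    fun x => kInv2 x (o1, x.2) rfl
  have starInv : ∀ x : G × H, s.inv x = (invG x.1, invH x.2) :=
    fun x => Prod.ext (starInv1 x) (starInv2 x)
  -- group axioms for the coordinate operations
  have assocG : ∀ a b c : G, mulG (mulG a b) c = mulG a (mulG b c) := by
    intro a b c
    have h := congrArg Prod.fst (grp_assoc (s := s) (a, o2) (b, o2) (c, o2))
    simp only [star1] at h
    exact h
  have onemulG : ∀ a : G, mulG o1 a = a := by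
    intro a
    have h := congrArg Prod.fst (grp_one_mul (s := s) (a, o2))
    exact h
  have invmulG : ∀ a : G, mulG (invG a) a = o1 := by
    intro a
    have h := congrArg Prod.fst (grp_inv_mul (s := s) (a, o2))
    simp only [star1] at h
    exact h
  have assocH : ∀ a b c : H, mulH (mulH a b) c = mulH a (mulH b c) := by
    intro a b c
    have h := congrArg Prod.snd (grp_assoc (s := s) (o1, a) (o1, b) (o1, c))
    simp only [star2] at h
    exact h
  have onemulH : ∀ a : H, mulH o2 a = a := by
    intro a
    have h := congrArg Prod.snd (grp_one_mul (s := s) (o1, a))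
    exact h
  have invmulH : ∀ a : H, mulH (invH a) a = o2 := by
    intro a
    have h := congrArg Prod.snd (grp_inv_mul (s := s) (o1, a))
    simp only [star2] at h
    exact h
  let sG : Group G := @Group.ofLeftAxioms G ⟨mulG⟩ ⟨invG⟩ ⟨o1⟩ assocG onemulG invmulG
  let sH : Group H := @Group.ofLeftAxioms H ⟨mulH⟩ ⟨invH⟩ ⟨o2⟩ assocH onemulH invmulH
  -- the coordinate structures are compatible with the coordinate metrics
  have hsGc : Compatible mG sG := by
    refine ⟨?_, ?_, ?_⟩
    · intro g x y
      have key : mG.dist (mulG g x) (mulG g y) + mH.dist (mulH o2 o2) (mulH o2 o2)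
          = mG.dist x y + mH.dist o2 o2 := by
        have k1 := hsl (g, o2) (x, o2) (y, o2)
        rw [star (g, o2) (x, o2), star (g, o2) (y, o2)] at k1
        exact k1
      have z1 := mdist_self mH (mulH o2 o2)
      have z2 := mdist_self mH o2
      show mG.dist (mulG g x) (mulG g y) = mG.dist x y
      linarith
    · intro g x y
      have key : mG.dist (mulG x g) (mulG y g) + mH.dist (mulH o2 o2) (mulH o2 o2)
          = mG.dist x y + mH.dist o2 o2 := by
        have k1 := hsr (g, o2) (x, o2) (y, o2)
        rw [star (x, o2) (g, o2), star (y, o2) (g, o2)] at k1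
        exact k1
      have z1 := mdist_self mH (mulH o2 o2)
      have z2 := mdist_self mH o2
      show mG.dist (mulG x g) (mulG y g) = mG.dist x y
      linarith
    · intro x y
      have key : mG.dist (invG x) (invG y) + mH.dist (invH o2) (invH o2)
          = mG.dist x y + mH.dist o2 o2 := by
        have k1 := hsi (x, o2) (y, o2)
        rw [starInv (x, o2), starInv (y, o2)] at k1
        exact k1
      have z1 := mdist_self mH (invH o2)
      have z2 := mdist_self mH o2
      show mG.dist (invG x) (invG y) = mG.dist x y
      linarith
  have hsHc : Compatible mH sH := by
    refine ⟨?_, ?_, ?_⟩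
    · intro g x y
      have key : mG.dist (mulG o1 o1) (mulG o1 o1) + mH.dist (mulH g x) (mulH g y)
          = mG.dist o1 o1 + mH.dist x y := by
        have k1 := hsl (o1, g) (o1, x) (o1, y)
        rw [star (o1, g) (o1, x), star (o1, g) (o1, y)] at k1
        exact k1
      have z1 := mdist_self mG (mulG o1 o1)
      have z2 := mdist_self mG o1
      show mH.dist (mulH g x) (mulH g y) = mH.dist x y
      linarith
    · intro g x y
      have key : mG.dist (mulG o1 o1) (mulG o1 o1) + mH.dist (mulH x g) (mulH y g)
          = mG.dist o1 o1 + mH.dist x y := by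
        have k1 := hsr (o1, g) (o1, x) (o1, y)
        rw [star (o1, x) (o1, g), star (o1, y) (o1, g)] at k1
        exact k1
      have z1 := mdist_self mG (mulG o1 o1)
      have z2 := mdist_self mG o1
      show mH.dist (mulH x g) (mulH y g) = mH.dist x y
      linarith
    · intro x y
      have key : mG.dist (invG o1) (invG o1) + mH.dist (invH x) (invH y)
          = mG.dist o1 o1 + mH.dist x y := by
        have k1 := hsi (o1, x) (o1, y)
        rw [starInv (o1, x), starInv (o1, y)] at k1
        exact k1
      have z1 := mdist_self mG (invG o1)
      have z2 := mdist_self mG o1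
      show mH.dist (invH x) (invH y) = mH.dist x y
      linarith
  obtain ⟨φG, hφG⟩ := hGu sG hsGc
  obtain ⟨φH, hφH⟩ := hHu sH hsHc
  refine ⟨{ toFun := fun p => (φG p.1, φH p.2),
            invFun := fun p => (φG.symm p.1, φH.symm p.2),
            left_inv := fun p => by simp,
            right_inv := fun p => by simp }, ?_⟩
  intro a b
  rw [star a b]
  refine Prod.ext ?_ ?_
  · show φG (mulG a.1 b.1) = iG.mul (φG a.1) (φG b.1)
    exact hφG a.1 b.1
  · show φH (mulH a.2 b.2) = iH.mul (φH a.2) (φH b.2)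
    exact hφH a.2 b.2
end NaturalGroupAux
end
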